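/- Let (ψ, φ, η) be a tnn-loop over ℤ^d that terminates, i.e., there is no e ∈ ℤ^d satisfying ψ such that φ holds at η^n(e) for all n ∈ ℕ. Then there exists a polynomial q in d variables with natural-number coefficients such that for every e = (e_1,...,e_d) ∈ ℤ^d satisfying ψ and φ: sup{k ∈ ℕ : φ holds at η^i(e) for all i < k} ≤ q(|e_1|,...,|e_d|). In other words, every terminating tnn-loop has a polynomial runtime bound in the absolute values of its inputs. -/

import Mathlib

open scoped Classical

noncomputable section

namespace Koat

/-! ### Formulas over polynomial atoms `p < q` -/

inductive Fml (V : Type*) where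
  | lt  : MvPolynomial V ℤ → MvPolynomial V ℤ → Fml V
  | and : Fml V → Fml V → Fml V
  | or  : Fml V → Fml V → Fml V

namespace Fml

variable {V : Type*}

/-- A formula holds in a state `σ : V → ℤ`. -/
def holds (σ : V → ℤ) : Fml V → Prop
  | .lt p q  => MvPolynomial.eval σ p < MvPolynomial.eval σ q
  | .and f g => holds σ f ∧ holds σ g
  | .or f g  => holds σ f ∨ holds σ g

/-- Applying an update `η` to a formula (substituting `η v` for each variable `v`). -/
def subst (η : V → MvPolynomial V ℤ) : Fml V → Fml V
  | .lt p q  => .lt (MvPolynomial.bind₁ η p) (MvPolynomial.bind₁ η q)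
  | .and f g => .and (subst η f) (subst η g)
  | .or f g  => .or (subst η f) (subst η g)

/-- The variables occurring in a formula. -/
def vars : Fml V → Finset V
  | .lt p q  => p.vars ∪ q.vars
  | .and f g => vars f ∪ vars g
  | .or f g  => vars f ∪ vars g

/-- The list of atoms `(s₁, s₂)` (meaning `s₁ < s₂`) occurring in a formula. -/
def atoms : Fml V → List (MvPolynomial V ℤ × MvPolynomial V ℤ)
  | .lt p q  => [(p, q)]
  | .and f g => atoms f ++ atoms g
  | .or f g  => atoms f ++ atoms g

end Fml

/-! ### Bounds -/

/-- The set `𝓑` of bounds: built from `ℕ ∪ {ω}`, variables, `+`, `·`, `k^{·}`. -/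
inductive Bnd (V : Type*) where
  | const : ℕ∞ → Bnd V
  | var : V → Bnd V
  | add : Bnd V → Bnd V → Bnd V
  | mul : Bnd V → Bnd V → Bnd V
  | exp : ℕ → Bnd V → Bnd V

/-- `k ^ e` for `e : ℕ∞`. -/
def epow (k : ℕ) (e : ℕ∞) : ℕ∞ := if e = ⊤ then ⊤ else ((k ^ e.toNat : ℕ) : ℕ∞)

namespace Bnd

variable {V : Type*}

/-- Evaluation of a bound in a (non-negative) state, with values in `ℕ ∪ {ω}`. -/
def eval (σ : V → ℕ) : Bnd V → ℕ∞
  | .const c => c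
  | .var v => (σ v : ℕ∞)
  | .add b₁ b₂ => eval σ b₁ + eval σ b₂
  | .mul b₁ b₂ => eval σ b₁ * eval σ b₂
  | .exp k b => epow k (eval σ b)

/-- `b [v / f v | v ∈ PV]`: substitute the bound `f v` for every program variable `v ∈ PV`. -/
def substOn (PV : Set V) (f : V → Bnd V) : Bnd V → Bnd V
  | .const c => .const c
  | .var v => if v ∈ PV then f v else .var v
  | .add b₁ b₂ => .add (substOn PV f b₁) (substOn PV f b₂)
  | .mul b₁ b₂ => .mul (substOn PV f b₁) (substOn PV f b₂)
  | .exp k b => .exp k (substOn PV f b)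

end Bnd

/-- The sum of a list of bounds. -/
def bndSum {V : Type*} (l : List (Bnd V)) : Bnd V := l.foldr Bnd.add (Bnd.const 0)

/-! ### Integer programs -/

/-- A transition `(ℓ, φ, η, ℓ')`. -/
structure Trans (L V : Type*) where
  src : L
  guard : Fml V
  update : V → MvPolynomial V ℤ
  tgt : L

/-- A configuration `(ℓ, σ)`. -/
abbrev Config (L V : Type*) := L × (V → ℤ)

/-- The evaluation step `(ℓ, σ) →_t (ℓ', σ')`: program variables are updated by `t.update`,
temporary variables (those outside `PV`) get arbitrary values. -/
def Step {L V : Type*} (PV : Set V) (t : Trans L V) (c c' : Config L V) : Prop :=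
  c.1 = t.src ∧ c'.1 = t.tgt ∧ t.guard.holds c.2 ∧
    ∀ v ∈ PV, c'.2 v = MvPolynomial.eval c.2 (t.update v)

/-- `→_S`, the union of `→_t` over `t ∈ S`. -/
def StepAny {L V : Type*} (PV : Set V) (S : Finset (Trans L V)) :
    Config L V → Config L V → Prop :=
  fun c c' => ∃ t ∈ S, Step PV t c c'

/-- `k`-fold composition of a relation. -/
def relPow {α : Type*} (R : α → α → Prop) : ℕ → α → α → Prop
  | 0 => Eq
  | n + 1 => Relation.Comp (relPow R n) R

/-- `→*_S ∘ →_t`. -/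
def starThen {L V : Type*} (PV : Set V) (S : Finset (Trans L V)) (t : Trans L V) :
    Config L V → Config L V → Prop :=
  Relation.Comp (Relation.ReflTransGen (StepAny PV S)) (Step PV t)

/-- `|σ|`, the state of absolute values. -/
def absState {V : Type*} (σ : V → ℤ) : V → ℕ := fun v => (σ v).natAbs

/-- `RB` is a global runtime bound for the program `(PV, L, ℓ₀, T)`. -/
def IsGlobalRB {L V : Type*} (PV : Set V) (ℓ₀ : L) (T : Finset (Trans L V))
    (RB : Trans L V → Bnd V) : Prop :=
  ∀ t ∈ T, ∀ σ₀ : V → ℤ,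
    (⨆ k ∈ {k : ℕ | ∃ c' : Config L V, relPow (starThen PV T t) k (ℓ₀, σ₀) c'}, (k : ℕ∞))
      ≤ (RB t).eval (absState σ₀)

/-- `SB` is a size bound for the program `(PV, L, ℓ₀, T)`. -/
def IsSizeBound {L V : Type*} (PV : Set V) (ℓ₀ : L) (T : Finset (Trans L V))
    (SB : Trans L V → V → Bnd V) : Prop :=
  ∀ t ∈ T, ∀ v ∈ PV, ∀ σ₀ : V → ℤ,
    (⨆ s ∈ {s : ℕ | ∃ c' : Config L V, starThen PV T t (ℓ₀, σ₀) c' ∧ s = (c'.2 v).natAbs},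
      (s : ℕ∞)) ≤ (SB t v).eval (absState σ₀)

/-- The entry transitions `E_{T'}`. -/
def entrySet {L V : Type*} (T T' : Finset (Trans L V)) : Set (Trans L V) :=
  {t | t ∈ T ∧ t ∉ T' ∧ ∃ t' ∈ T', t'.src = t.tgt}

/-- `RB` is a local runtime bound for `T'gt` w.r.t. `T'` in the program `(PV, L, ℓ₀, T)`. -/
def IsLocalRB {L V : Type*} (PV : Set V) (ℓ₀ : L) (T T'gt T' : Finset (Trans L V))
    (RB : Trans L V → Bnd V) : Prop :=
  ∀ t ∈ T'gt, ∀ r ∈ entrySet T T', ∀ σ : V → ℤ,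
    (⨆ k ∈ {k : ℕ | ∃ (σ₀ : V → ℤ) (c' : Config L V),
        starThen PV T r (ℓ₀, σ₀) (r.tgt, σ) ∧ relPow (starThen PV T' t) k (r.tgt, σ) c'},
      (k : ℕ∞)) ≤ (RB r).eval (absState σ)

/-- Chaining two transitions: `t₁ ⋆ t₂`. -/
def chain2 {L V : Type*} (t₁ t₂ : Trans L V) : Trans L V :=
  ⟨t₁.src, (t₁.guard).and (t₂.guard.subst t₁.update),
    fun v => MvPolynomial.bind₁ t₁.update (t₂.update v), t₂.tgt⟩

/-- Chaining a (nonempty) list of transitions `t₁ ⋆ ⋯ ⋆ tₙ` (with a default for `[]`). -/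
def chainFold {L V : Type*} (dflt : Trans L V) : List (Trans L V) → Trans L V
  | [] => dflt
  | t :: ts => ts.foldl chain2 t

/-- The composed evaluation relation `→_{t₁} ∘ ⋯ ∘ →_{tₙ}`. -/
def stepsList {L V : Type*} (PV : Set V) : List (Trans L V) → Config L V → Config L V → Prop
  | [] => Eq
  | t :: ts => Relation.Comp (Step PV t) (stepsList PV ts)

/-! ### Twn-loops -/

/-- An update `η` as a function on states `ℤ^d → ℤ^d`. -/
def updFun {d : ℕ} (η : Fin d → MvPolynomial (Fin d) ℤ) (σ : Fin d → ℤ) : Fin d → ℤ :=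
  fun i => MvPolynomial.eval σ (η i)

/-- `η` is triangular weakly non-linear with data `c`, `p`:
`η xᵢ = cᵢ·xᵢ + pᵢ` with `pᵢ ∈ ℤ[x_{i+1},…,x_d]`. -/
def IsTriangular {d : ℕ} (η : Fin d → MvPolynomial (Fin d) ℤ) (c : Fin d → ℤ)
    (p : Fin d → MvPolynomial (Fin d) ℤ) : Prop :=
  ∀ i, η i = MvPolynomial.C (c i) * MvPolynomial.X i + p i ∧ ∀ j ∈ (p i).vars, i < j

/-- Triangular weakly non-linear update. -/
def IsTWN {d : ℕ} (η : Fin d → MvPolynomial (Fin d) ℤ) : Prop :=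
  ∃ c p, IsTriangular η c p

/-- Triangular weakly non-linear update with non-negative coefficients. -/
def IsTNN {d : ℕ} (η : Fin d → MvPolynomial (Fin d) ℤ) : Prop :=
  ∃ c p, IsTriangular η c p ∧ ∀ i, 0 ≤ c i

/-- `(b₁,a₁) >_lex (b₂,a₂)`. -/
def lexGt (b₁ a₁ b₂ a₂ : ℕ) : Prop := b₂ < b₁ ∨ (b₁ = b₂ ∧ a₂ < a₁)

/-- The set of all valid `k`-monotonicity thresholds of `(b₁,a₁)` and `(b₂,a₂)`. -/
def mthSet (k b₁ a₁ b₂ a₂ : ℕ) : Set ℕ :=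
  {n₀ | ∀ n ≥ n₀, k * (n ^ a₂ * b₂ ^ n) < n ^ a₁ * b₁ ^ n}

/-- The `k`-monotonicity threshold of `(b₁,a₁)` and `(b₂,a₂)` (the smallest member of
`mthSet`, when it exists). -/
def mth (k b₁ a₁ b₂ a₂ : ℕ) : ℕ := sInf (mthSet k b₁ a₁ b₂ a₂)

/-- `M_j` as in the paper. -/
def Mdef (b a : ℕ → ℕ) (j : ℕ) : ℕ :=
  if b j = b (j - 1) then 0 else mth 1 (b j) (a j) (b (j - 1)) (a (j - 1) + 1)

/-- `N_j` as in the paper. -/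
def Ndef (b a : ℕ → ℕ) (j : ℕ) : ℕ :=
  if j = 2 then 1
  else if j = 3 then mth 1 (b 2) (a 2) (b 1) (a 1)
  else
    max ((Finset.Icc 1 (j - 3)).sup fun i => mth 1 (b (j - 2)) (a (j - 2)) (b i) (a i))
      (mth (j - 2) (b (j - 1)) (a (j - 1)) (b (j - 2)) (a (j - 2)))

/-- The over-approximation `⊔ {p j | j ∈ s}`: each monomial gets the maximal absolute value
of its coefficients in the `p j`. -/
def sqcupF {d : ℕ} {ι : Type*} (s : Finset ι) (p : ι → MvPolynomial (Fin d) ℤ) :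
    MvPolynomial (Fin d) ℤ :=
  ∑ m ∈ s.biUnion fun j => (p j).support,
    MvPolynomial.monomial m (((s.sup fun j => ((p j).coeff m).natAbs : ℕ) : ℤ))

/-- Normalized poly-exponential expressions, as finite (formal) sums of
`p · n^a · b^n` with `p ∈ ℚ[x₁,…,x_d]`. -/
abbrev NPE (d : ℕ) := List (MvPolynomial (Fin d) ℚ × ℕ × ℕ)

/-- The value of a normalized poly-exponential expression at `(e, n)`. -/
def evalNPE {d : ℕ} (l : NPE d) (e : Fin d → ℤ) (n : ℕ) : ℚ :=
  (l.map fun tr =>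
    MvPolynomial.eval (fun i => (e i : ℚ)) tr.1 * (n : ℚ) ^ tr.2.1 * (tr.2.2 : ℚ) ^ n).sum


/-! ### Auxiliary development for Statement 11 -/

section Aux

open MvPolynomial Finset

variable {d : ℕ}

/-- Functions of (initial state, iteration count). -/
abbrev Efn (d : ℕ) := (Fin d → ℤ) → ℕ → ℚ

/-- `f` is eventually given by a normalized poly-exponential expression with bases `≥ 1`. -/
def IsNPEF (f : Efn d) : Prop :=
  ∃ (l : NPE d) (n0 : ℕ), (∀ tr ∈ l, 1 ≤ tr.2.2) ∧
    ∀ e n, n0 ≤ n → f e n = evalNPE l e n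

lemma evalNPE_nil (e : Fin d → ℤ) (n : ℕ) : evalNPE ([] : NPE d) e n = 0 := rfl

lemma evalNPE_cons (tr : MvPolynomial (Fin d) ℚ × ℕ × ℕ) (l : NPE d) (e : Fin d → ℤ) (n : ℕ) :
    evalNPE (tr :: l) e n =
      MvPolynomial.eval (fun i => (e i : ℚ)) tr.1 * (n : ℚ) ^ tr.2.1 * (tr.2.2 : ℚ) ^ n
        + evalNPE l e n := by
  simp [evalNPE]

lemma evalNPE_append (l₁ l₂ : NPE d) (e : Fin d → ℤ) (n : ℕ) :
    evalNPE (l₁ ++ l₂) e n = evalNPE l₁ e n + evalNPE l₂ e n := by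
  simp [evalNPE]

lemma isNPEF_congr {f g : Efn d} (h : IsNPEF f) (hfg : ∀ e n, g e n = f e n) : IsNPEF g := by
  obtain ⟨l, n0, hb, hl⟩ := h
  exact ⟨l, n0, hb, fun e n hn => (hfg e n).trans (hl e n hn)⟩

lemma isNPEF_zero : IsNPEF (fun (_ : Fin d → ℤ) (_ : ℕ) => (0 : ℚ)) :=
  ⟨[], 0, by simp, fun e n _ => rfl⟩

lemma isNPEF_polyConst (q : MvPolynomial (Fin d) ℚ) :
    IsNPEF (fun e (_ : ℕ) => MvPolynomial.eval (fun i => (e i : ℚ)) q) := by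
  refine ⟨[(q, 0, 1)], 0, by simp, fun e n _ => ?_⟩
  simp [evalNPE]

lemma isNPEF_one : IsNPEF (fun (_ : Fin d → ℤ) (_ : ℕ) => (1 : ℚ)) := by
  have := isNPEF_polyConst (d := d) 1
  exact isNPEF_congr this (by simp)

lemma isNPEF_add {f g : Efn d} (hf : IsNPEF f) (hg : IsNPEF g) :
    IsNPEF (fun e n => f e n + g e n) := by
  obtain ⟨l₁, n₁, hb₁, hl₁⟩ := hf
  obtain ⟨l₂, n₂, hb₂, hl₂⟩ := hg
  refine ⟨l₁ ++ l₂, max n₁ n₂, ?_, fun e n hn => ?_⟩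
  · intro tr htr
    rcases List.mem_append.1 htr with h | h
    exacts [hb₁ tr h, hb₂ tr h]
  · dsimp only
    rw [evalNPE_append, hl₁ e n (le_trans (le_max_left _ _) hn),
      hl₂ e n (le_trans (le_max_right _ _) hn)]

/-- one term times a list -/
lemma evalNPE_termMul (t : MvPolynomial (Fin d) ℚ × ℕ × ℕ) (l : NPE d) (e : Fin d → ℤ) (n : ℕ) :
    evalNPE (l.map fun t2 => (t.1 * t2.1, t.2.1 + t2.2.1, t.2.2 * t2.2.2)) e n =
      (MvPolynomial.eval (fun i => (e i : ℚ)) t.1 * (n : ℚ) ^ t.2.1 * (t.2.2 : ℚ) ^ n) * evalNPE l e n := by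
  induction l with
  | nil => simp [evalNPE]
  | cons t2 l ih =>
      rw [List.map_cons, evalNPE_cons, evalNPE_cons, ih]
      simp only [map_mul, Nat.cast_mul, mul_pow, pow_add]
      ring

lemma isNPEF_mul {f g : Efn d} (hf : IsNPEF f) (hg : IsNPEF g) :
    IsNPEF (fun e n => f e n * g e n) := by
  obtain ⟨l₁, n₁, hb₁, hl₁⟩ := hf
  obtain ⟨l₂, n₂, hb₂, hl₂⟩ := hg
  refine ⟨l₁.flatMap fun t1 => l₂.map fun t2 => (t1.1 * t2.1, t1.2.1 + t2.2.1, t1.2.2 * t2.2.2),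
    max n₁ n₂, ?_, fun e n hn => ?_⟩
  · intro tr htr
    rcases List.mem_flatMap.1 htr with ⟨t1, ht1, htr⟩
    rcases List.mem_map.1 htr with ⟨t2, ht2, rfl⟩
    exact Nat.one_le_iff_ne_zero.2 (Nat.mul_ne_zero
      (Nat.one_le_iff_ne_zero.1 (hb₁ t1 ht1)) (Nat.one_le_iff_ne_zero.1 (hb₂ t2 ht2)))
  · dsimp only
    rw [hl₁ e n (le_trans (le_max_left _ _) hn), hl₂ e n (le_trans (le_max_right _ _) hn)]
    clear hl₁ hl₂ hb₁
    induction l₁ with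
    | nil => simp [evalNPE]
    | cons t1 l₁ ih =>
        rw [List.flatMap_cons, evalNPE_append, evalNPE_cons, add_mul, ih, evalNPE_termMul]

lemma isNPEF_pow {f : Efn d} (hf : IsNPEF f) (k : ℕ) :
    IsNPEF (fun e n => f e n ^ k) := by
  induction k with
  | zero => exact isNPEF_congr isNPEF_one (by simp)
  | succ k ih => exact isNPEF_congr (isNPEF_mul ih hf) (fun e n => by rw [pow_succ])

lemma isNPEF_finsetSum {ι : Type*} (s : Finset ι) (F : ι → Efn d)
    (h : ∀ i ∈ s, IsNPEF (F i)) : IsNPEF (fun e n => ∑ i ∈ s, F i e n) := by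
  classical
  induction s using Finset.cons_induction with
  | empty => exact isNPEF_congr isNPEF_zero (by simp)
  | cons a s ha ih =>
      refine isNPEF_congr (isNPEF_add (h a (Finset.mem_cons_self a s))
        (ih fun i hi => h i (Finset.mem_cons_of_mem hi))) ?_
      intro e n; rw [Finset.sum_cons]

lemma isNPEF_finsetProd {ι : Type*} (s : Finset ι) (F : ι → Efn d)
    (h : ∀ i ∈ s, IsNPEF (F i)) : IsNPEF (fun e n => ∏ i ∈ s, F i e n) := by
  classical
  induction s using Finset.cons_induction with
  | empty => exact isNPEF_congr isNPEF_one (by simp)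
  | cons a s ha ih =>
      refine isNPEF_congr (isNPEF_mul (h a (Finset.mem_cons_self a s))
        (ih fun i hi => h i (Finset.mem_cons_of_mem hi))) ?_
      intro e n; rw [Finset.prod_cons]

lemma cast_eval (σ : Fin d → ℤ) (p : MvPolynomial (Fin d) ℤ) :
    ((MvPolynomial.eval σ p : ℤ) : ℚ) =
      MvPolynomial.eval (fun i => (σ i : ℚ)) (MvPolynomial.map (Int.castRingHom ℚ) p) := by
  rw [MvPolynomial.eval_map]
  have h := MvPolynomial.eval₂_comp_left (Int.castRingHom ℚ) (RingHom.id ℤ) σ p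
  simp only [MvPolynomial.eval₂_id, RingHom.comp_id] at h
  simpa [Function.comp_def] using h

lemma eval_map_eq_sum (p : MvPolynomial (Fin d) ℤ) (x : Fin d → ℚ) :
    MvPolynomial.eval x (MvPolynomial.map (Int.castRingHom ℚ) p) =
      ∑ m ∈ p.support, ((p.coeff m : ℤ) : ℚ) * ∏ i, x i ^ m i := by
  rw [MvPolynomial.eval_eq']
  calc ∑ m ∈ (MvPolynomial.map (Int.castRingHom ℚ) p).support,
        MvPolynomial.coeff m (MvPolynomial.map (Int.castRingHom ℚ) p) * ∏ i, x i ^ m i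
      = ∑ m ∈ p.support, MvPolynomial.coeff m (MvPolynomial.map (Int.castRingHom ℚ) p) * ∏ i, x i ^ m i := by
        refine Finset.sum_subset (MvPolynomial.support_map_subset _ _) fun m _ hm => ?_
        rw [MvPolynomial.notMem_support_iff.1 hm, zero_mul]
    _ = ∑ m ∈ p.support, ((p.coeff m : ℤ) : ℚ) * ∏ i, x i ^ m i := by
        refine Finset.sum_congr rfl fun m _ => ?_
        rw [MvPolynomial.coeff_map]
        rfl

lemma isNPEF_comp (x : Fin d → Efn d) (p : MvPolynomial (Fin d) ℤ)
    (hx : ∀ j ∈ p.vars, IsNPEF (x j)) :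
    IsNPEF (fun e n =>
      MvPolynomial.eval (fun j => x j e n) (MvPolynomial.map (Int.castRingHom ℚ) p)) := by
  refine isNPEF_congr (isNPEF_finsetSum p.support
    (fun m e n => ((p.coeff m : ℤ) : ℚ) * ∏ i, x i e n ^ m i) ?_) ?_
  · intro m hm
    refine isNPEF_mul (isNPEF_congr (isNPEF_polyConst (MvPolynomial.C ((p.coeff m : ℤ) : ℚ)))
      (by simp)) (isNPEF_finsetProd Finset.univ (fun j e n => x j e n ^ m j) ?_)
    intro j _
    by_cases hj : m j = 0
    · exact isNPEF_congr isNPEF_one (by simp [hj])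
    · have hjv : j ∈ p.vars :=
        (MvPolynomial.mem_vars j).2 ⟨m, hm, Finsupp.mem_support_iff.2 hj⟩
      exact isNPEF_pow (hx j hjv) _
  · intro e n
    exact eval_map_eq_sum p _

/-- Solving the one-step polynomial functional equation `b·P(n+1) = c·P(n) + n^a`. -/
lemma solve_rec (b c : ℕ) (hb : 1 ≤ b) (a : ℕ) : ∃ P : Polynomial ℚ,
    ∀ n : ℕ, (b : ℚ) * P.eval ((n : ℚ) + 1) = (c : ℚ) * P.eval (n : ℚ) + (n : ℚ) ^ a := by
  induction a using Nat.strong_induction_on with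
  | _ a ih =>
  have hsol : ∀ k : ℕ, ∃ P : Polynomial ℚ, k < a →
      ∀ n : ℕ, (b : ℚ) * P.eval ((n : ℚ) + 1) = (c : ℚ) * P.eval (n : ℚ) + (n : ℚ) ^ k := by
    intro k
    by_cases hk : k < a
    · exact (ih k hk).imp fun P hP _ => hP
    · exact ⟨0, fun h => absurd h hk⟩
  choose sol hsolp using hsol
  have main : ∀ (L : Polynomial ℚ) (γ : ℕ → ℚ),
      (∀ n : ℕ, (b : ℚ) * L.eval ((n : ℚ) + 1) - (c : ℚ) * L.eval (n : ℚ)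
        = (n : ℚ) ^ a + ∑ m ∈ Finset.range a, γ m * (n : ℚ) ^ m) →
      ∃ P : Polynomial ℚ, ∀ n : ℕ,
        (b : ℚ) * P.eval ((n : ℚ) + 1) = (c : ℚ) * P.eval (n : ℚ) + (n : ℚ) ^ a := by
    intro L γ hL
    refine ⟨L - ∑ k ∈ Finset.range a, Polynomial.C (γ k) * sol k, fun n => ?_⟩
    have hb' : (b : ℚ) * ∑ k ∈ Finset.range a, γ k * (sol k).eval ((n : ℚ) + 1)
        = (c : ℚ) * (∑ k ∈ Finset.range a, γ k * (sol k).eval (n : ℚ))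
          + ∑ k ∈ Finset.range a, γ k * (n : ℚ) ^ k := by
      rw [Finset.mul_sum, Finset.mul_sum, ← Finset.sum_add_distrib]
      refine Finset.sum_congr rfl fun k hk => ?_
      have h := hsolp k (Finset.mem_range.1 hk) n
      linear_combination γ k * h
    have hLn := hL n
    simp only [Polynomial.eval_sub, Polynomial.eval_finset_sum, Polynomial.eval_mul,
      Polynomial.eval_C]
    linarith [hb', hLn]
  by_cases hbc : b = c
  · -- equal bases
    have hb0 : (b : ℚ) ≠ 0 := by positivity
    have ha0 : ((a : ℚ) + 1) ≠ 0 := by positivity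
    refine main (Polynomial.C ((b : ℚ)⁻¹ * ((a : ℚ) + 1)⁻¹) * Polynomial.X ^ (a + 1))
      (fun m => ((a : ℚ) + 1)⁻¹ * ((a + 1).choose m : ℚ)) fun n => ?_
    have hx : ((n : ℚ) + 1) ^ (a + 1)
        = (n : ℚ) ^ (a + 1) + ((a : ℚ) + 1) * (n : ℚ) ^ a
          + ∑ m ∈ Finset.range a, (n : ℚ) ^ m * ((a + 1).choose m : ℚ) := by
      have h := add_pow (n : ℚ) 1 (a + 1)
      simp only [one_pow, mul_one] at h
      rw [h, Finset.sum_range_succ, Finset.sum_range_succ, Nat.choose_succ_self_right,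
        Nat.choose_self]
      push_cast
      ring
    have hS : ∑ m ∈ Finset.range a, (((a : ℚ) + 1)⁻¹ * ((a + 1).choose m : ℚ)) * (n : ℚ) ^ m
        = ((a : ℚ) + 1)⁻¹ * ∑ m ∈ Finset.range a, (n : ℚ) ^ m * ((a + 1).choose m : ℚ) := by
      rw [Finset.mul_sum]
      exact Finset.sum_congr rfl fun m _ => by ring
    subst hbc
    simp only [Polynomial.eval_mul, Polynomial.eval_C, Polynomial.eval_pow, Polynomial.eval_X]
    rw [hx, hS]
    field_simp
    ring
  · -- distinct bases
    have hd0 : (b : ℚ) - (c : ℚ) ≠ 0 := by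
      rw [sub_ne_zero]
      exact_mod_cast hbc
    refine main (Polynomial.C ((b : ℚ) - (c : ℚ))⁻¹ * Polynomial.X ^ a)
      (fun m => ((b : ℚ) - (c : ℚ))⁻¹ * (b : ℚ) * (a.choose m : ℚ)) fun n => ?_
    have hx : ((n : ℚ) + 1) ^ a
        = (n : ℚ) ^ a + ∑ m ∈ Finset.range a, (n : ℚ) ^ m * (a.choose m : ℚ) := by
      have h := add_pow (n : ℚ) 1 a
      simp only [one_pow, mul_one] at h
      rw [h, Finset.sum_range_succ, Nat.choose_self]
      push_cast
      ring
    have hS : ∑ m ∈ Finset.range a, (((b : ℚ) - (c : ℚ))⁻¹ * (b : ℚ) * (a.choose m : ℚ)) * (n : ℚ) ^ m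
        = ((b : ℚ) - (c : ℚ))⁻¹ * (b : ℚ)
          * ∑ m ∈ Finset.range a, (n : ℚ) ^ m * (a.choose m : ℚ) := by
      rw [Finset.mul_sum]
      exact Finset.sum_congr rfl fun m _ => by ring
    simp only [Polynomial.eval_mul, Polynomial.eval_C, Polynomial.eval_pow, Polynomial.eval_X]
    rw [hx, hS]
    field_simp
    ring

lemma evalNPE_rangeMap (F : ℕ → MvPolynomial (Fin d) ℚ × ℕ × ℕ) (N : ℕ)
    (e : Fin d → ℤ) (n : ℕ) :
    evalNPE ((List.range N).map F) e n =
      ∑ k ∈ Finset.range N, MvPolynomial.eval (fun i => (e i : ℚ)) (F k).1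
        * (n : ℚ) ^ (F k).2.1 * ((F k).2.2 : ℚ) ^ n := by
  induction N with
  | zero => simp [evalNPE]
  | succ N ih =>
      rw [List.range_succ, List.map_append, evalNPE_append, ih, Finset.sum_range_succ]
      simp [evalNPE]

/-- every `fun e => evalNPE l e N` (at a fixed time `N`) is polynomial in `e` -/
lemma evalNPE_fixed (l : NPE d) (N : ℕ) :
    ∃ q : MvPolynomial (Fin d) ℚ, ∀ e,
      evalNPE l e N = MvPolynomial.eval (fun i => (e i : ℚ)) q := by
  induction l with
  | nil => exact ⟨0, by simp [evalNPE]⟩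
  | cons t l ih =>
      obtain ⟨q', hq'⟩ := ih
      refine ⟨MvPolynomial.C ((N : ℚ) ^ t.2.1 * (t.2.2 : ℚ) ^ N) * t.1 + q', fun e => ?_⟩
      rw [evalNPE_cons, hq' e]
      simp
      ring

/-- shifting an NPE by one step -/
lemma npe_shift (l : NPE d) (hb : ∀ tr ∈ l, 1 ≤ tr.2.2) :
    ∃ l' : NPE d, (∀ tr ∈ l', 1 ≤ tr.2.2) ∧
      ∀ e n, 1 ≤ n → evalNPE l' e n = evalNPE l e (n - 1) := by
  induction l with
  | nil => exact ⟨[], by simp, fun e n _ => rfl⟩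
  | cons t l ih =>
      obtain ⟨l', hb', hl'⟩ := ih fun tr htr => hb tr (List.mem_cons_of_mem t htr)
      have hbt : 1 ≤ t.2.2 := hb t (List.mem_cons_self)
      have hbQ : (t.2.2 : ℚ) ≠ 0 := by positivity
      refine ⟨((List.range (t.2.1 + 1)).map fun k =>
        (MvPolynomial.C ((t.2.1.choose k : ℚ) * (-1 : ℚ) ^ (t.2.1 - k) * (t.2.2 : ℚ)⁻¹) * t.1,
          k, t.2.2)) ++ l', ?_, fun e n hn => ?_⟩
      · intro tr htr
        rcases List.mem_append.1 htr with h | h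
        · rcases List.mem_map.1 h with ⟨k, _, rfl⟩
          exact hbt
        · exact hb' tr h
      · rw [evalNPE_append, evalNPE_cons, hl' e n hn, evalNPE_rangeMap]
        congr 1
        have hc : ((n - 1 : ℕ) : ℚ) = (n : ℚ) - 1 := by
          have : (1 : ℕ) ≤ n := hn
          push_cast [this]
          ring
        have hpow : (t.2.2 : ℚ) ^ (n - 1) * (t.2.2 : ℚ) = (t.2.2 : ℚ) ^ n := by
          rw [← pow_succ]
          congr 1
          omega
        have hb1 : ((n : ℚ) - 1) ^ t.2.1
            = ∑ k ∈ Finset.range (t.2.1 + 1),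
                (n : ℚ) ^ k * (-1 : ℚ) ^ (t.2.1 - k) * (t.2.1.choose k : ℚ) := by
          have h := add_pow (n : ℚ) (-1 : ℚ) t.2.1
          simpa [sub_eq_add_neg] using h
        have hinv : (t.2.2 : ℚ)⁻¹ * (t.2.2 : ℚ) ^ n = (t.2.2 : ℚ) ^ (n - 1) := by
          rw [← hpow]
          field_simp
        have hL : (∑ k ∈ Finset.range (t.2.1 + 1),
              MvPolynomial.eval (fun i => ((e i : ℤ) : ℚ))
                ((MvPolynomial.C ((t.2.1.choose k : ℚ) * (-1 : ℚ) ^ (t.2.1 - k)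
                  * (t.2.2 : ℚ)⁻¹) * t.1, k, t.2.2) : MvPolynomial (Fin d) ℚ × ℕ × ℕ).1
                * (n : ℚ) ^ k * (t.2.2 : ℚ) ^ n)
            = MvPolynomial.eval (fun i => ((e i : ℤ) : ℚ)) t.1 * (t.2.2 : ℚ) ^ (n - 1)
              * ∑ k ∈ Finset.range (t.2.1 + 1),
                  (n : ℚ) ^ k * (-1 : ℚ) ^ (t.2.1 - k) * (t.2.1.choose k : ℚ) := by
          rw [Finset.mul_sum]
          refine Finset.sum_congr rfl fun k _ => ?_
          simp only [map_mul, MvPolynomial.eval_C]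
          linear_combination ((t.2.1.choose k : ℚ) * (-1 : ℚ) ^ (t.2.1 - k)
            * MvPolynomial.eval (fun i => ((e i : ℤ) : ℚ)) t.1 * (n : ℚ) ^ k) * hinv
        rw [hL, hc, hb1]
        ring

/-- particular NPE solution of `y(n+1) = c·y(n) + evalNPE l e n` -/
lemma npe_particular (c : ℕ) (l : NPE d) (hb : ∀ tr ∈ l, 1 ≤ tr.2.2) :
    ∃ lp : NPE d, (∀ tr ∈ lp, 1 ≤ tr.2.2) ∧
      ∀ e n, evalNPE lp e (n + 1) = c * evalNPE lp e n + evalNPE l e n := by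
  induction l with
  | nil => exact ⟨[], by simp, fun e n => by simp [evalNPE]⟩
  | cons t l ih =>
      obtain ⟨lp, hbp, hrp⟩ := ih fun tr htr => hb tr (List.mem_cons_of_mem t htr)
      have hbt : 1 ≤ t.2.2 := hb t (List.mem_cons_self)
      obtain ⟨P, hP⟩ := solve_rec t.2.2 c hbt t.2.1
      refine ⟨((List.range (P.natDegree + 1)).map fun k =>
        (MvPolynomial.C (P.coeff k) * t.1, k, t.2.2)) ++ lp, ?_, fun e n => ?_⟩
      · intro tr htr
        rcases List.mem_append.1 htr with h | h
        · rcases List.mem_map.1 h with ⟨k, _, rfl⟩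
          exact hbt
        · exact hbp tr h
      · have hterm : ∀ m : ℕ, evalNPE ((List.range (P.natDegree + 1)).map fun k =>
            (MvPolynomial.C (P.coeff k) * t.1, k, t.2.2)) e m
            = MvPolynomial.eval (fun i => (e i : ℚ)) t.1 * P.eval (m : ℚ) * (t.2.2 : ℚ) ^ m := by
          intro m
          rw [evalNPE_rangeMap, Polynomial.eval_eq_sum_range, Finset.mul_sum, Finset.sum_mul]
          refine Finset.sum_congr rfl fun k _ => ?_
          simp only [map_mul, MvPolynomial.eval_C]
          ring
        rw [evalNPE_append, evalNPE_append, evalNPE_cons, hterm, hterm, hrp]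
        have hPn := hP n
        push_cast
        linear_combination (MvPolynomial.eval (fun i => ((e i : ℤ) : ℚ)) t.1
          * (t.2.2 : ℚ) ^ n) * hPn

/-- solving the recurrence `y(n+1) = c·y(n) + g(n)` within NPE functions -/
lemma isNPEF_rec (c : ℕ) (g y : Efn d) (hg : IsNPEF g)
    (hy : ∀ n : ℕ, ∃ q : MvPolynomial (Fin d) ℚ, ∀ e,
      y e n = MvPolynomial.eval (fun i => (e i : ℚ)) q)
    (hrec : ∀ e n, y e (n + 1) = (c : ℚ) * y e n + g e n) : IsNPEF y := by
  obtain ⟨l, n0, hb, hl⟩ := hg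
  rcases Nat.eq_zero_or_pos c with hc | hc
  · obtain ⟨l', hb', hl'⟩ := npe_shift l hb
    refine ⟨l', n0 + 1, hb', fun e n hn => ?_⟩
    obtain ⟨m, rfl⟩ : ∃ m, n = m + 1 := ⟨n - 1, by omega⟩
    have : y e (m + 1) = g e m := by
      rw [hrec e m, hc]
      push_cast
      ring
    rw [this, hl e m (by omega), hl' e (m + 1) (by omega), Nat.add_sub_cancel]
  · obtain ⟨lp, hbp, hrp⟩ := npe_particular c l hb
    obtain ⟨q0, hq0⟩ := hy n0
    obtain ⟨qp, hqp⟩ := evalNPE_fixed lp n0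
    have hcQ : ((c : ℚ) ^ n0) ≠ 0 := by positivity
    set αq : MvPolynomial (Fin d) ℚ := MvPolynomial.C (((c : ℚ) ^ n0)⁻¹) * (q0 - qp) with hαq
    refine ⟨lp ++ [(αq, 0, c)], n0, ?_, fun e n hn => ?_⟩
    · intro tr htr
      rcases List.mem_append.1 htr with h | h
      · exact hbp tr h
      · simp at h
        rw [h]
        exact hc
    · rw [evalNPE_append]
      have hα : ∀ m, evalNPE [(αq, 0, c)] e m
          = (MvPolynomial.eval (fun i => (e i : ℚ)) q0
            - MvPolynomial.eval (fun i => (e i : ℚ)) qp) * ((c : ℚ) ^ n0)⁻¹ * (c : ℚ) ^ m := by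
        intro m
        rw [evalNPE_cons, evalNPE_nil, hαq]
        simp only [map_mul, map_sub, MvPolynomial.eval_C, pow_zero]
        ring
      induction n, hn using Nat.le_induction with
      | base =>
          rw [hα n0, hq0 e, ← hqp e]
          field_simp
          ring
      | succ n hn ihn =>
          rw [hrec e n, ihn, hα, hα, hl e n hn, hrp]
          ring

/-- the `i`-th coordinate after `n` steps, as a rational -/
def Xfn (η : Fin d → MvPolynomial (Fin d) ℤ) (i : Fin d) : Efn d :=
  fun e n => (((updFun η)^[n] e) i : ℚ)

lemma iter_eval (η : Fin d → MvPolynomial (Fin d) ℤ) (n : ℕ) (i : Fin d) (e : Fin d → ℤ) :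
    ((updFun η)^[n] e) i
      = MvPolynomial.eval e ((MvPolynomial.bind₁ η)^[n] (MvPolynomial.X i)) := by
  induction n generalizing e with
  | zero => simp
  | succ n ih =>
      rw [Function.iterate_succ_apply, ih (updFun η e), Function.iterate_succ_apply']
      exact (MvPolynomial.eval₂Hom_bind₁ (RingHom.id ℤ) e η _).symm

lemma xfn_polyInE (η : Fin d → MvPolynomial (Fin d) ℤ) (i : Fin d) (n : ℕ) :
    ∃ q : MvPolynomial (Fin d) ℚ, ∀ e, Xfn η i e n
      = MvPolynomial.eval (fun j => (e j : ℚ)) q := by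
  refine ⟨MvPolynomial.map (Int.castRingHom ℚ) ((MvPolynomial.bind₁ η)^[n] (MvPolynomial.X i)),
    fun e => ?_⟩
  rw [Xfn, iter_eval, cast_eval]

lemma isNPEF_coord (η : Fin d → MvPolynomial (Fin d) ℤ) (c : Fin d → ℤ)
    (p : Fin d → MvPolynomial (Fin d) ℤ) (htri : IsTriangular η c p) (hc : ∀ i, 0 ≤ c i) :
    ∀ i : Fin d, IsNPEF (Xfn η i) := by
  have key : ∀ k : ℕ, ∀ i : Fin d, d - (i : ℕ) ≤ k → IsNPEF (Xfn η i) := by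
    intro k
    induction k with
    | zero => intro i h; exact absurd h (by omega)
    | succ k ih =>
        intro i hik
        have hg : IsNPEF (fun e n =>
            MvPolynomial.eval (fun j => Xfn η j e n)
              (MvPolynomial.map (Int.castRingHom ℚ) (p i))) := by
          apply isNPEF_comp
          intro j hj
          have hij : (i : ℕ) < (j : ℕ) := (htri i).2 j hj
          exact ih j (by omega)
        apply isNPEF_rec (c i).toNat _ _ hg (xfn_polyInE η i)
        intro e n
        have hstep : ((updFun η)^[n + 1] e) i
            = c i * ((updFun η)^[n] e) i + MvPolynomial.eval ((updFun η)^[n] e) (p i) := by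
          rw [Function.iterate_succ_apply']
          show MvPolynomial.eval ((updFun η)^[n] e) (η i) = _
          rw [(htri i).1]
          simp
        show (((updFun η)^[n + 1] e) i : ℚ) = _
        rw [hstep]
        push_cast
        rw [cast_eval]
        have hct : (((c i).toNat : ℕ) : ℚ) = ((c i : ℤ) : ℚ) := by
          exact_mod_cast Int.toNat_of_nonneg (hc i)
        rw [hct]
        rfl
  exact fun i => key d i (by omega)

/-- the value of any polynomial along the trajectory is an NPE function -/
lemma isNPEF_traj (η : Fin d → MvPolynomial (Fin d) ℤ) (c : Fin d → ℤ)
    (p : Fin d → MvPolynomial (Fin d) ℤ) (htri : IsTriangular η c p) (hc : ∀ i, 0 ≤ c i)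
    (s : MvPolynomial (Fin d) ℤ) :
    IsNPEF (fun e n => ((MvPolynomial.eval ((updFun η)^[n] e) s : ℤ) : ℚ)) := by
  refine isNPEF_congr (isNPEF_comp (Xfn η) s fun j _ => isNPEF_coord η c p htri hc j) ?_
  intro e n
  rw [cast_eval]
  rfl

lemma clear_denom (q : MvPolynomial (Fin d) ℚ) :
    ∃ (D : ℕ) (pz : MvPolynomial (Fin d) ℤ), 1 ≤ D ∧ ∀ e : Fin d → ℤ,
      (D : ℚ) * MvPolynomial.eval (fun i => (e i : ℚ)) q
        = ((MvPolynomial.eval e pz : ℤ) : ℚ) := by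
  induction q using MvPolynomial.induction_on with
  | C r =>
      refine ⟨r.den, MvPolynomial.C r.num, r.pos, fun e => ?_⟩
      simp only [MvPolynomial.eval_C]
      have hd : ((r.den : ℕ) : ℚ) ≠ 0 := by
        exact_mod_cast r.den_nz
      have h := Rat.num_div_den r
      rw [div_eq_iff hd] at h
      rw [mul_comm]
      exact h.symm
  | add p q ihp ihq =>
      obtain ⟨D1, p1, hD1, h1⟩ := ihp
      obtain ⟨D2, p2, hD2, h2⟩ := ihq
      refine ⟨D1 * D2, MvPolynomial.C (D2 : ℤ) * p1 + MvPolynomial.C (D1 : ℤ) * p2,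
        Nat.one_le_iff_ne_zero.2 (Nat.mul_ne_zero (by omega) (by omega)), fun e => ?_⟩
      have := h1 e
      have := h2 e
      push_cast
      simp only [map_add, map_mul, MvPolynomial.eval_C]
      push_cast
      linear_combination (D2 : ℚ) * h1 e + (D1 : ℚ) * h2 e
  | mul_X p i ihp =>
      obtain ⟨D1, p1, hD1, h1⟩ := ihp
      refine ⟨D1, p1 * MvPolynomial.X i, hD1, fun e => ?_⟩
      simp only [map_mul, MvPolynomial.eval_X]
      push_cast
      linear_combination (e i : ℚ) * h1 e

/-- normalization of an NPE into a grouped integer-coefficient form -/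
lemma npe_normalize (l : NPE d) (hb : ∀ tr ∈ l, 1 ≤ tr.2.2) :
    ∃ (D : ℕ) (K : Finset (ℕ × ℕ)) (Q : ℕ × ℕ → MvPolynomial (Fin d) ℤ),
      1 ≤ D ∧ (∀ k ∈ K, 1 ≤ k.2) ∧
      ∀ e n, (D : ℚ) * evalNPE l e n
        = ∑ k ∈ K, ((MvPolynomial.eval e (Q k) : ℤ) : ℚ) * (n : ℚ) ^ k.1 * (k.2 : ℚ) ^ n := by
  induction l with
  | nil => exact ⟨1, ∅, fun _ => 0, le_refl 1, by simp, fun e n => by simp [evalNPE]⟩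
  | cons t l ih =>
      obtain ⟨D1, K1, Q1, hD1, hK1, hE1⟩ := ih fun tr htr => hb tr (List.mem_cons_of_mem t htr)
      obtain ⟨D2, pz, hD2, hE2⟩ := clear_denom t.1
      set key : ℕ × ℕ := (t.2.1, t.2.2) with hkey
      refine ⟨D1 * D2, insert key K1, fun k =>
        MvPolynomial.C (D2 : ℤ) * (if k ∈ K1 then Q1 k else 0)
          + (if k = key then MvPolynomial.C (D1 : ℤ) * pz else 0),
        Nat.one_le_iff_ne_zero.2 (Nat.mul_ne_zero (by omega) (by omega)), ?_, fun e n => ?_⟩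
      · intro k hk
        rcases Finset.mem_insert.1 hk with rfl | hk
        · exact hb t (List.mem_cons_self)
        · exact hK1 k hk
      · have hsplit : ∀ k ∈ insert key K1,
            ((MvPolynomial.eval e (MvPolynomial.C (D2 : ℤ) * (if k ∈ K1 then Q1 k else 0)
              + (if k = key then MvPolynomial.C (D1 : ℤ) * pz else 0)) : ℤ) : ℚ)
              * (n : ℚ) ^ k.1 * (k.2 : ℚ) ^ n
            = (D2 : ℚ) * (((MvPolynomial.eval e (if k ∈ K1 then Q1 k else 0) : ℤ) : ℚ)
                * (n : ℚ) ^ k.1 * (k.2 : ℚ) ^ n)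
              + (if k = key then (D1 : ℚ) * (((MvPolynomial.eval e pz : ℤ) : ℚ)
                * (n : ℚ) ^ k.1 * (k.2 : ℚ) ^ n) else 0) := by
          intro k _
          by_cases hk : k = key <;> by_cases hk1 : k ∈ K1 <;>
            simp only [hk, hk1, if_pos, if_neg, ite_true, ite_false, not_false_iff,
              map_add, map_mul, MvPolynomial.eval_C, map_zero] <;>
            push_cast <;> ring
        rw [Finset.sum_congr rfl hsplit, Finset.sum_add_distrib]
        have hB : ∑ k ∈ insert key K1,
            (if k = key then (D1 : ℚ) * (((MvPolynomial.eval e pz : ℤ) : ℚ)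
              * (n : ℚ) ^ k.1 * (k.2 : ℚ) ^ n) else 0)
            = (D1 : ℚ) * (((MvPolynomial.eval e pz : ℤ) : ℚ)
              * (n : ℚ) ^ key.1 * (key.2 : ℚ) ^ n) := by
          rw [Finset.sum_ite_eq' (insert key K1) key]
          simp
        have hA : ∑ k ∈ insert key K1,
            (D2 : ℚ) * (((MvPolynomial.eval e (if k ∈ K1 then Q1 k else 0) : ℤ) : ℚ)
              * (n : ℚ) ^ k.1 * (k.2 : ℚ) ^ n)
            = (D2 : ℚ) * ∑ k ∈ K1, ((MvPolynomial.eval e (Q1 k) : ℤ) : ℚ)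
                * (n : ℚ) ^ k.1 * (k.2 : ℚ) ^ n := by
          rw [Finset.mul_sum]
          by_cases hkK : key ∈ K1
          · rw [Finset.insert_eq_self.2 hkK]
            refine Finset.sum_congr rfl fun k hk => by rw [if_pos hk]
          · rw [Finset.sum_insert hkK, if_neg hkK]
            simp only [map_zero, Int.cast_zero, zero_mul, mul_zero, zero_add]
            refine Finset.sum_congr rfl fun k hk => by rw [if_pos hk]
        rw [hA, hB, evalNPE_cons, ← hE1 e n]
        have h2 := hE2 e
        push_cast
        linear_combination ((D1 : ℚ) * (n : ℚ) ^ t.2.1 * (t.2.2 : ℚ) ^ n) * h2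

set_option maxRecDepth 10000 in
/-- polynomial bound on the absolute value of an integer polynomial -/
lemma abs_eval_le (P : MvPolynomial (Fin d) ℤ) :
    ∃ B : MvPolynomial (Fin d) ℕ, ∀ e : Fin d → ℤ,
      |MvPolynomial.eval e P| ≤ ((MvPolynomial.eval (fun i => (e i).natAbs) B : ℕ) : ℤ) := by
  refine ⟨∑ m ∈ P.support, MvPolynomial.monomial m ((P.coeff m).natAbs), fun e => ?_⟩
  have hB : ((MvPolynomial.eval (fun i => (e i).natAbs)
      (∑ m ∈ P.support, MvPolynomial.monomial m ((P.coeff m).natAbs)) : ℕ) : ℤ)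
      = ∑ m ∈ P.support, |P.coeff m| * ∏ i, |e i| ^ m i := by
    rw [map_sum]
    push_cast
    refine Finset.sum_congr rfl fun m _ => ?_
    rw [MvPolynomial.eval_monomial, Finsupp.prod_pow]
    push_cast
    rfl
  rw [hB, MvPolynomial.eval_eq']
  refine le_trans (Finset.abs_sum_le_sum_abs _ _) (le_of_eq ?_)
  refine Finset.sum_congr rfl fun m _ => ?_
  rw [abs_mul, Finset.abs_prod]
  congr 1
  exact Finset.prod_congr rfl fun i _ => by rw [abs_pow]

/-- the key growth lemma: a lex-bigger term eventually dominates, with a threshold linear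
in the required factor `W` -/
lemma growth (a b a' b' : ℕ) (hb' : 1 ≤ b') (hlex : b' < b ∨ (b' = b ∧ a' < a)) :
    ∃ C : ℕ, 1 ≤ C ∧ ∀ W n : ℕ, 1 ≤ W → C * W ≤ n →
      W * (n ^ a' * b' ^ n) ≤ n ^ a * b ^ n := by
  rcases hlex with hbb | ⟨rfl, haa⟩
  · -- b' < b : the exponential wins
    set A := a' + 1 with hA
    refine ⟨2 * A + 2 ^ A * A.factorial * b' ^ A, by
      have : 0 < 2 * A + 2 ^ A * A.factorial * b' ^ A := by positivity
      omega, fun W n hW hn => ?_⟩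
    have hCW : 2 * A ≤ n ∧ 2 ^ A * A.factorial * b' ^ A * W ≤ n := by
      constructor
      · calc 2 * A ≤ (2 * A + 2 ^ A * A.factorial * b' ^ A) * W := by
              calc 2 * A ≤ (2 * A + 2 ^ A * A.factorial * b' ^ A) * 1 := by omega
              _ ≤ _ := Nat.mul_le_mul_left _ hW
            _ ≤ n := hn
      · calc 2 ^ A * A.factorial * b' ^ A * W
            ≤ (2 * A + 2 ^ A * A.factorial * b' ^ A) * W := Nat.mul_le_mul_right _ (by omega)
          _ ≤ n := hn
    obtain ⟨hn2A, hnW⟩ := hCW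
    have hAn : A ≤ n := by omega
    have hn1 : 1 ≤ n := by omega
    -- h1 : n^A ≥ n^a' * (2^A * A! * b'^A * W)
    have h1 : n ^ a' * (2 ^ A * A.factorial * b' ^ A * W) ≤ n ^ A := by
      rw [hA, pow_succ]
      exact Nat.mul_le_mul_left _ hnW
    -- h2 : n^A ≤ 2^A * (n+1-A)^A
    have h2 : n ^ A ≤ 2 ^ A * (n + 1 - A) ^ A := by
      rw [← Nat.mul_pow]
      refine Nat.pow_le_pow_left ?_ _
      omega
    -- h3 : (n+1-A)^A ≤ A! * choose n A
    have h3 : (n + 1 - A) ^ A ≤ A.factorial * n.choose A := by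
      calc (n + 1 - A) ^ A ≤ n.descFactorial A := Nat.pow_sub_le_descFactorial n A
        _ = A.factorial * n.choose A := Nat.descFactorial_eq_factorial_mul_choose n A
    -- h4 : choose n A * b'^n ≤ b'^A * b^n
    have h4 : n.choose A * b' ^ n ≤ b' ^ A * b ^ n := by
      have ht : 1 ≤ b - b' := by omega
      have hbt : b' + (b - b') = b := by omega
      have hs : b ^ n = ∑ k ∈ Finset.range (n + 1),
          b' ^ k * (b - b') ^ (n - k) * n.choose k := by
        conv_lhs => rw [← hbt]
        exact add_pow b' (b - b') n
      have hterm : n.choose A * b' ^ (n - A) ≤ b ^ n := by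
        rw [hs]
        calc n.choose A * b' ^ (n - A)
            ≤ b' ^ (n - A) * (b - b') ^ (n - (n - A)) * n.choose (n - A) := by
              rw [Nat.choose_symm hAn]
              have h1le : 1 ≤ (b - b') ^ (n - (n - A)) := Nat.one_le_pow _ _ (by omega)
              calc n.choose A * b' ^ (n - A) = b' ^ (n - A) * 1 * n.choose A := by ring
                _ ≤ b' ^ (n - A) * (b - b') ^ (n - (n - A)) * n.choose A :=
                    Nat.mul_le_mul_right _ (Nat.mul_le_mul_left _ h1le)
          _ ≤ ∑ k ∈ Finset.range (n + 1), b' ^ k * (b - b') ^ (n - k) * n.choose k :=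
              Finset.single_le_sum (f := fun k => b' ^ k * (b - b') ^ (n - k) * n.choose k)
                (fun k _ => Nat.zero_le _) (Finset.mem_range.2 (by omega))
      calc n.choose A * b' ^ n = n.choose A * b' ^ (n - A) * b' ^ A := by
            rw [mul_assoc, ← pow_add]
            congr 2
            omega
        _ ≤ b ^ n * b' ^ A := Nat.mul_le_mul_right _ hterm
        _ = b' ^ A * b ^ n := mul_comm _ _
    -- combine
    have key : W * (n ^ a' * b' ^ n) * (2 ^ A * A.factorial * b' ^ A)
        ≤ b ^ n * (2 ^ A * A.factorial * b' ^ A) := by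
      calc W * (n ^ a' * b' ^ n) * (2 ^ A * A.factorial * b' ^ A)
          = (n ^ a' * (2 ^ A * A.factorial * b' ^ A * W)) * b' ^ n := by ring
        _ ≤ n ^ A * b' ^ n := Nat.mul_le_mul_right _ h1
        _ ≤ (2 ^ A * (n + 1 - A) ^ A) * b' ^ n := Nat.mul_le_mul_right _ h2
        _ ≤ (2 ^ A * (A.factorial * n.choose A)) * b' ^ n := by
            refine Nat.mul_le_mul_right _ (Nat.mul_le_mul_left _ h3)
        _ = (2 ^ A * A.factorial) * (n.choose A * b' ^ n) := by ring
        _ ≤ (2 ^ A * A.factorial) * (b' ^ A * b ^ n) := Nat.mul_le_mul_left _ h4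
        _ = b ^ n * (2 ^ A * A.factorial * b' ^ A) := by ring
    have hpos : 0 < 2 ^ A * A.factorial * b' ^ A := by positivity
    have hWn : W * (n ^ a' * b' ^ n) ≤ b ^ n := Nat.le_of_mul_le_mul_right key hpos
    calc W * (n ^ a' * b' ^ n) ≤ b ^ n := hWn
      _ ≤ n ^ a * b ^ n := Nat.le_mul_of_pos_left _ (by positivity)
  · -- equal bases, bigger exponent: `n` wins
    refine ⟨1, le_refl 1, fun W n hW hn => ?_⟩
    rw [one_mul] at hn
    have hn1 : 1 ≤ n := le_trans hW hn
    calc W * (n ^ a' * b' ^ n) ≤ n * (n ^ a' * b' ^ n) := Nat.mul_le_mul_right _ hn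
      _ = n ^ (a' + 1) * b' ^ n := by ring
      _ ≤ n ^ a * b' ^ n := by
          refine Nat.mul_le_mul_right _ (Nat.pow_le_pow_right hn1 (by omega))

/-- **Stabilization**: the sign of an NPE function stabilizes after a polynomial
(in the absolute values of the input) number of steps. -/
lemma stab (f : Efn d) (hf : IsNPEF f) :
    ∃ Q : MvPolynomial (Fin d) ℕ, ∀ e : Fin d → ℤ, ∀ n n' : ℕ,
      MvPolynomial.eval (fun i => (e i).natAbs) Q ≤ n →
      MvPolynomial.eval (fun i => (e i).natAbs) Q ≤ n' →
      (0 < f e n ↔ 0 < f e n') := by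
  classical
  obtain ⟨l, n0, hbl, hl⟩ := hf
  obtain ⟨D, K, Qz, hD, hKb, hE⟩ := npe_normalize l hbl
  set F : (Fin d → ℤ) → ℕ → ℤ := fun e n =>
    ∑ k ∈ K, MvPolynomial.eval e (Qz k) * (n : ℤ) ^ k.1 * (k.2 : ℤ) ^ n with hF
  have hFf : ∀ e n, n0 ≤ n → (0 < f e n ↔ 0 < F e n) := by
    intro e n hn
    have h1 : (D : ℚ) * f e n = ((F e n : ℤ) : ℚ) := by
      rw [hl e n hn, hE e n, hF]
      push_cast
      rfl
    have hD0 : (0 : ℚ) < (D : ℚ) := by exact_mod_cast Nat.lt_of_lt_of_le Nat.zero_lt_one hD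
    constructor
    · intro h
      have h2 : (0 : ℚ) < (D : ℚ) * f e n := mul_pos hD0 h
      rw [h1] at h2
      exact_mod_cast h2
    · intro h
      have h2 : (0 : ℚ) < ((F e n : ℤ) : ℚ) := by exact_mod_cast h
      rw [← h1] at h2
      nlinarith [h2, hD0]
  choose B hB using fun k => abs_eval_le (Qz k)
  set Bs : MvPolynomial (Fin d) ℕ := ∑ k ∈ K, B k with hBs
  have hBs' : ∀ (e : Fin d → ℤ), ∀ k ∈ K, (MvPolynomial.eval e (Qz k)).natAbs
      ≤ MvPolynomial.eval (fun i => (e i).natAbs) Bs := by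
    intro e k hk
    have h1 := hB k e
    have h2 : (MvPolynomial.eval (fun i => (e i).natAbs) (B k) : ℕ)
        ≤ MvPolynomial.eval (fun i => (e i).natAbs) Bs := by
      rw [hBs, map_sum]
      exact Finset.single_le_sum
        (f := fun k => MvPolynomial.eval (fun i => (e i).natAbs) (B k))
        (fun _ _ => Nat.zero_le _) hk
    have h3 : ((MvPolynomial.eval e (Qz k)).natAbs : ℤ)
        ≤ ((MvPolynomial.eval (fun i => (e i).natAbs) (B k) : ℕ) : ℤ) := by
      rw [Int.natCast_natAbs]
      exact h1
    have h4 : (MvPolynomial.eval e (Qz k)).natAbs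
        ≤ MvPolynomial.eval (fun i => (e i).natAbs) (B k) := by exact_mod_cast h3
    exact le_trans h4 h2
  have hgr : ∀ kk : (ℕ × ℕ) × (ℕ × ℕ), ∃ C : ℕ, 1 ≤ C ∧
      ((1 ≤ kk.1.2 ∧ (kk.1.2 < kk.2.2 ∨ (kk.1.2 = kk.2.2 ∧ kk.1.1 < kk.2.1))) →
        ∀ W n : ℕ, 1 ≤ W → C * W ≤ n →
          W * (n ^ kk.1.1 * kk.1.2 ^ n) ≤ n ^ kk.2.1 * kk.2.2 ^ n) := by
    intro kk
    by_cases h : 1 ≤ kk.1.2 ∧ (kk.1.2 < kk.2.2 ∨ (kk.1.2 = kk.2.2 ∧ kk.1.1 < kk.2.1))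
    · obtain ⟨C, hC1, hC⟩ := growth kk.2.1 kk.2.2 kk.1.1 kk.1.2 h.1 h.2
      exact ⟨C, hC1, fun _ => hC⟩
    · exact ⟨1, le_refl 1, fun hh => absurd hh h⟩
  choose Cg hCg1 hCg using hgr
  set Cm : ℕ := (K ×ˢ K).sup Cg + 1 with hCm
  set m : ℕ := K.card with hm
  refine ⟨MvPolynomial.C (n0 + 1) + MvPolynomial.C (Cm * (m + 1)) * (Bs + 1),
    fun e n n' hn hn' => ?_⟩
  set Bv : ℕ := MvPolynomial.eval (fun i => (e i).natAbs) Bs with hBv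
  have hNval : MvPolynomial.eval (fun i => (e i).natAbs)
      (MvPolynomial.C (n0 + 1) + MvPolynomial.C (Cm * (m + 1)) * (Bs + 1))
      = (n0 + 1) + Cm * (m + 1) * (Bv + 1) := by
    simp [hBv]
  rw [hNval] at hn hn'
  by_cases hall : ∀ k ∈ K, MvPolynomial.eval e (Qz k) = 0
  · have hzero : ∀ j, n0 ≤ j → ¬ (0 < f e j) := by
      intro j hj
      rw [hFf e j hj]
      have hz : F e j = 0 :=
        Finset.sum_eq_zero fun k hk => by rw [hall k hk, zero_mul, zero_mul]
      omega
    exact iff_of_false (hzero n (by omega)) (hzero n' (by omega))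
  · push_neg at hall
    obtain ⟨k0, hk0K, hk0⟩ := hall
    set S := K.filter (fun k => MvPolynomial.eval e (Qz k) ≠ 0) with hS
    have hSne : S.Nonempty := ⟨k0, Finset.mem_filter.2 ⟨hk0K, hk0⟩⟩
    obtain ⟨ks, hksS, hksmax⟩ :=
      Finset.exists_max_image S (fun k => toLex (k.2, k.1)) hSne
    have hksK : ks ∈ K := (Finset.mem_filter.1 hksS).1
    have hksne : MvPolynomial.eval e (Qz ks) ≠ 0 := (Finset.mem_filter.1 hksS).2
    set W : ℕ := (m + 1) * (Bv + 1) with hW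
    have hW1 : 1 ≤ W := by rw [hW]; exact Nat.mul_pos (by omega) (by omega)
    have key : ∀ j, (n0 + 1) + Cm * (m + 1) * (Bv + 1) ≤ j →
        (0 < F e j ↔ 0 < MvPolynomial.eval e (Qz ks)) := by
      intro j hj
      have hj1 : 1 ≤ j := by omega
      have hjCW : ∀ k ∈ K, Cg (k, ks) * W ≤ j := by
        intro k hk
        have h1 : Cg (k, ks) ≤ (K ×ˢ K).sup Cg :=
          Finset.le_sup (Finset.mem_product.2 ⟨hk, hksK⟩)
        calc Cg (k, ks) * W ≤ Cm * W := Nat.mul_le_mul_right _ (by omega)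
          _ = Cm * (m + 1) * (Bv + 1) := by rw [hW]; ring
          _ ≤ j := by omega
      have hdom : ∀ k ∈ K, k ≠ ks →
          (m + 1) * ((MvPolynomial.eval e (Qz k)).natAbs * (j ^ k.1 * k.2 ^ j))
            ≤ j ^ ks.1 * ks.2 ^ j := by
        intro k hk hne
        by_cases hz : MvPolynomial.eval e (Qz k) = 0
        · simp [hz]
        · have hkS : k ∈ S := Finset.mem_filter.2 ⟨hk, hz⟩
          have hlex := hksmax k hkS
          have hstrict : k.2 < ks.2 ∨ (k.2 = ks.2 ∧ k.1 < ks.1) := by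
            rcases lt_or_eq_of_le hlex with hlt | heq
            · exact Prod.Lex.lt_iff.1 hlt
            · exfalso
              apply hne
              have : (k.2, k.1) = (ks.2, ks.1) := congrArg ofLex heq
              have h1 : k.2 = ks.2 := congrArg Prod.fst this
              have h2 : k.1 = ks.1 := congrArg Prod.snd this
              exact Prod.ext h2 h1
          have hWk : (m + 1) * (MvPolynomial.eval e (Qz k)).natAbs ≤ W := by
            rw [hW]
            exact Nat.mul_le_mul_left _ (by have := hBs' e k hk; omega)
          calc (m + 1) * ((MvPolynomial.eval e (Qz k)).natAbs * (j ^ k.1 * k.2 ^ j))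
              = ((m + 1) * (MvPolynomial.eval e (Qz k)).natAbs) * (j ^ k.1 * k.2 ^ j) := by
                ring
            _ ≤ W * (j ^ k.1 * k.2 ^ j) := Nat.mul_le_mul_right _ hWk
            _ ≤ j ^ ks.1 * ks.2 ^ j :=
                hCg (k, ks) ⟨hKb k hk, hstrict⟩ W j hW1 (hjCW k hk)
      set M : ℕ := j ^ ks.1 * ks.2 ^ j with hM
      have hM1 : 1 ≤ M := by
        have h1 : 0 < j ^ ks.1 := pow_pos (by omega) _
        have h2 : 0 < ks.2 ^ j := pow_pos (hKb ks hksK) _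
        exact Nat.mul_pos h1 h2
      have hsum : ∑ k ∈ K.erase ks,
          (MvPolynomial.eval e (Qz k)).natAbs * (j ^ k.1 * k.2 ^ j) < M := by
        have h2 : ∑ k ∈ K.erase ks,
            (m + 1) * ((MvPolynomial.eval e (Qz k)).natAbs * (j ^ k.1 * k.2 ^ j))
            ≤ ∑ _k ∈ K.erase ks, M :=
          Finset.sum_le_sum fun k hk =>
            hdom k (Finset.mem_of_mem_erase hk) (Finset.ne_of_mem_erase hk)
        rw [Finset.sum_const, ← Finset.mul_sum] at h2
        have hcard : (K.erase ks).card ≤ m := le_trans (Finset.card_erase_le) (le_refl _)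
        have h3 : (m + 1) * ∑ k ∈ K.erase ks,
            (MvPolynomial.eval e (Qz k)).natAbs * (j ^ k.1 * k.2 ^ j) ≤ m * M :=
          le_trans h2 (Nat.mul_le_mul_right _ hcard)
        nlinarith [h3, hM1]
      have hMc : (j : ℤ) ^ ks.1 * (ks.2 : ℤ) ^ j = (M : ℤ) := by
        rw [hM]
        push_cast
        ring
      have hFsplit : F e j = MvPolynomial.eval e (Qz ks) * (j : ℤ) ^ ks.1 * (ks.2 : ℤ) ^ j
          + ∑ k ∈ K.erase ks, MvPolynomial.eval e (Qz k) * (j : ℤ) ^ k.1 * (k.2 : ℤ) ^ j := by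
        rw [hF]
        exact (Finset.add_sum_erase K _ hksK).symm
      have hrest : |∑ k ∈ K.erase ks,
          MvPolynomial.eval e (Qz k) * (j : ℤ) ^ k.1 * (k.2 : ℤ) ^ j| ≤ (M : ℤ) - 1 := by
        refine le_trans (Finset.abs_sum_le_sum_abs _ _) ?_
        have h1 : ∀ k ∈ K.erase ks, |MvPolynomial.eval e (Qz k) * (j : ℤ) ^ k.1 * (k.2 : ℤ) ^ j|
            = (((MvPolynomial.eval e (Qz k)).natAbs * (j ^ k.1 * k.2 ^ j) : ℕ) : ℤ) := by
          intro k _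
          rw [abs_mul, abs_mul, abs_pow, abs_pow, Int.abs_natCast, Int.abs_natCast]
          push_cast
          ring
        rw [Finset.sum_congr rfl h1, ← Nat.cast_sum]
        have h2 : ∑ k ∈ K.erase ks,
            (MvPolynomial.eval e (Qz k)).natAbs * (j ^ k.1 * k.2 ^ j) ≤ M - 1 := by omega
        calc ((∑ k ∈ K.erase ks,
            (MvPolynomial.eval e (Qz k)).natAbs * (j ^ k.1 * k.2 ^ j) : ℕ) : ℤ)
            ≤ ((M - 1 : ℕ) : ℤ) := by exact_mod_cast h2
          _ = (M : ℤ) - 1 := by push_cast [hM1]; ring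
      rw [mul_assoc, hMc] at hFsplit
      rw [hFsplit]
      have habs := abs_le.1 hrest
      have hM1z : (1 : ℤ) ≤ (M : ℤ) := by exact_mod_cast hM1
      constructor
      · intro h
        by_contra hle
        push_neg at hle
        have hle1 : MvPolynomial.eval e (Qz ks) ≤ -1 := by omega
        have h5 : MvPolynomial.eval e (Qz ks) * (M : ℤ) ≤ -1 * (M : ℤ) :=
          mul_le_mul_of_nonneg_right hle1 (by linarith)
        linarith [habs.2, h5]
      · intro h
        have hge1 : (1 : ℤ) ≤ MvPolynomial.eval e (Qz ks) := h
        have h5 : 1 * (M : ℤ) ≤ MvPolynomial.eval e (Qz ks) * (M : ℤ) :=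
          mul_le_mul_of_nonneg_right hge1 (by linarith)
        linarith [habs.1, h5]
    rw [hFf e n (by omega), hFf e n' (by omega), key n hn, key n' hn']

/-- stabilization of the truth value of a formula along the trajectory -/
lemma fml_stab (η : Fin d → MvPolynomial (Fin d) ℤ) (c : Fin d → ℤ)
    (p : Fin d → MvPolynomial (Fin d) ℤ) (htri : IsTriangular η c p) (hc : ∀ i, 0 ≤ c i)
    (φ : Fml (Fin d)) :
    ∃ Q : MvPolynomial (Fin d) ℕ, ∀ e : Fin d → ℤ, ∀ n n' : ℕ,
      MvPolynomial.eval (fun i => (e i).natAbs) Q ≤ n →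
      MvPolynomial.eval (fun i => (e i).natAbs) Q ≤ n' →
      (φ.holds ((updFun η)^[n] e) ↔ φ.holds ((updFun η)^[n'] e)) := by
  induction φ with
  | lt s1 s2 =>
      obtain ⟨Q, hQ⟩ := stab _ (isNPEF_traj η c p htri hc (s2 - s1))
      refine ⟨Q, fun e n n' hn hn' => ?_⟩
      have hiff : ∀ j : ℕ, (Fml.holds ((updFun η)^[j] e) (Fml.lt s1 s2))
          ↔ 0 < ((MvPolynomial.eval ((updFun η)^[j] e) (s2 - s1) : ℤ) : ℚ) := by
        intro j
        show MvPolynomial.eval _ s1 < MvPolynomial.eval _ s2 ↔ _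
        have hcast : ((0 : ℚ) < ((MvPolynomial.eval ((updFun η)^[j] e) (s2 - s1) : ℤ) : ℚ))
            ↔ 0 < MvPolynomial.eval ((updFun η)^[j] e) (s2 - s1) := by
          exact_mod_cast Iff.rfl
        rw [hcast, map_sub, sub_pos]
      rw [hiff n, hiff n', hQ e n n' hn hn']
  | and f g ihf ihg =>
      obtain ⟨Qf, hQf⟩ := ihf
      obtain ⟨Qg, hQg⟩ := ihg
      refine ⟨Qf + Qg, fun e n n' hn hn' => ?_⟩
      rw [map_add] at hn hn'
      show (_ ∧ _) ↔ (_ ∧ _)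
      rw [hQf e n n' (by omega) (by omega), hQg e n n' (by omega) (by omega)]
  | or f g ihf ihg =>
      obtain ⟨Qf, hQf⟩ := ihf
      obtain ⟨Qg, hQg⟩ := ihg
      refine ⟨Qf + Qg, fun e n n' hn hn' => ?_⟩
      rw [map_add] at hn hn'
      show (_ ∨ _) ↔ (_ ∨ _)
      rw [hQf e n n' (by omega) (by omega), hQg e n n' (by omega) (by omega)]

end Aux

/-- every terminating tnn-loop `(ψ, φ, η)` has a polynomial runtime
bound (a polynomial with natural coefficients in the absolute values of the inputs). -/
theorem terminating_tnn_polynomial_bound {d : ℕ} (ψ φ : Fml (Fin d))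
    (η : Fin d → MvPolynomial (Fin d) ℤ) (htnn : IsTNN η)
    (hinv : ∀ e : Fin d → ℤ, ψ.holds e → ψ.holds (updFun η e))
    (hterm : ¬ ∃ e : Fin d → ℤ, ψ.holds e ∧ ∀ n : ℕ, φ.holds ((updFun η)^[n] e)) :
    ∃ q : MvPolynomial (Fin d) ℕ,
      ∀ e : Fin d → ℤ, ψ.holds e → φ.holds e →
        (⨆ k ∈ {k : ℕ | ∀ i < k, φ.holds ((updFun η)^[i] e)}, (k : ℕ∞))
          ≤ (MvPolynomial.eval (fun i => (e i).natAbs) q : ℕ∞) := by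
  obtain ⟨c, p, htri, hc⟩ := htnn
  obtain ⟨Q, hQ⟩ := fml_stab η c p htri hc φ
  refine ⟨Q, fun e hψ hφ => ?_⟩
  set N := MvPolynomial.eval (fun i => (e i).natAbs) Q with hN
  have hψiter : ∀ n, ψ.holds ((updFun η)^[n] e) := by
    intro n
    induction n with
    | zero => simpa using hψ
    | succ n ih =>
        rw [Function.iterate_succ_apply']
        exact hinv _ ih
  have hfail : ¬ φ.holds ((updFun η)^[N] e) := by
    intro hhold
    apply hterm
    refine ⟨(updFun η)^[N] e, hψiter N, fun n => ?_⟩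
    rw [← Function.iterate_add_apply]
    exact (hQ e (n + N) N (by omega) (le_refl N)).2 hhold
  refine iSup₂_le fun k hk => ?_
  have hkN : k ≤ N := by
    by_contra hgt
    push_neg at hgt
    exact hfail (hk N hgt)
  exact_mod_cast Nat.cast_le.2 hkN

end Koat
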